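/- (Single-letter sum-rate converse bound.) Let Q, X₁, X₂, X₃ be finite-valued random variables with X₁, X₂, X₃ mutually conditionally independent given Q. For l, k ∈ {1,2,3}, let X_{lk} = g_{lk}(X_l) for arbitrary functions g_{lk}; let S₁ = h₁(X₂₁,X₃₁), S₂ = h₂(X₁₂,X₃₂), S₃ = h₃(X₁₃,X₂₃) with h₁, h₂, h₃ one-to-one in each argument; and let Y_k = f_k(X_{kk},S_k) with f₁, f₂, f₃ one-to-one in each argument. Assume the invertibility conditions H(S₁|Q) = H(X₂₁|Q)+H(X₃₁|Q), H(S₂|Q) = H(X₁₂|Q)+H(X₃₂|Q), H(S₃|Q) = H(X₁₃|Q)+H(X₂₃|Q), and the strong-interference conditions H(X₂₂|Q) ≤ H(X₂₁|Q) and H(X₃₃|Q) ≤ H(X₃₁|Q). Then I(X₁;Y₁|Q) + I(X₂;Y₂|Q) + I(X₃;Y₃|Q) ≤ H(Y₁|Q). -/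

import Mathlib

open scoped Classical
open Finset

/-- A probability mass function on a finite sample space, given as a real-valued
weight function that is nonnegative and sums to one. -/
structure FinPMF (Ω : Type) where
  [fin : Fintype Ω]
  p : Ω → ℝ
  nonneg : ∀ ω, 0 ≤ p ω
  sum_one : ∑ ω, p ω = 1

/-- Probability of an event. -/
noncomputable def prE {Ω : Type} (μ : FinPMF Ω) (E : Ω → Prop) : ℝ :=
  letI := μ.fin
  ∑ ω, if E ω then μ.p ω else 0

/-- Probability that the random variable `X` takes the value `x`. -/
noncomputable def prX {Ω α : Type} (μ : FinPMF Ω) (X : Ω → α) (x : α) : ℝ :=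
  prE μ (fun ω => X ω = x)

/-- Shannon entropy (base 2) of a random variable on a finite probability space. -/
noncomputable def entH {Ω α : Type} (μ : FinPMF Ω) (X : Ω → α) : ℝ :=
  letI := μ.fin;
  -∑ x ∈ Finset.univ.image X, prX μ X x * Real.logb 2 (prX μ X x)

/-- Conditional entropy `H(X | Y)` (base 2). -/
noncomputable def condH {Ω α β : Type} (μ : FinPMF Ω) (X : Ω → α) (Y : Ω → β) : ℝ :=
  entH μ (fun ω => (X ω, Y ω)) - entH μ Y

/-- Conditional mutual information `I(X ; Y | Q)` (base 2). -/
noncomputable def condMI {Ω α β γ : Type} (μ : FinPMF Ω) (X : Ω → α) (Y : Ω → β)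
    (Q : Ω → γ) : ℝ :=
  condH μ X Q + condH μ Y Q - condH μ (fun ω => (X ω, Y ω)) Q

/-- A two-argument function is one-to-one in each argument. -/
def OneToOne {A B C : Type} (f : A → B → C) : Prop :=
  (∀ b, Function.Injective fun a => f a b) ∧ ∀ a, Function.Injective (f a)

/-- Conditional pmf `p_{X|U}(x|u)`. -/
noncomputable def condP {Ω α γ : Type} (μ : FinPMF Ω) (X : Ω → α) (U : Ω → γ)
    (x : α) (u : γ) : ℝ :=
  prE μ (fun ω => X ω = x ∧ U ω = u) / prX μ U u

/-- Independence of two random variables. -/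
def IndepFun {Ω α β : Type} (μ : FinPMF Ω) (X : Ω → α) (S : Ω → β) : Prop :=
  ∀ x s, prE μ (fun ω => X ω = x ∧ S ω = s) = prX μ X x * prX μ S s

/-- Conditional independence of `A` and `B` given `Z`:
for every `z` with `P(Z = z) > 0`, `P(A = a, B = b | Z = z) = P(A = a | Z = z) P(B = b | Z = z)`. -/
def CondIndepFun {Ω α β γ : Type} (μ : FinPMF Ω) (A : Ω → α) (B : Ω → β) (Z : Ω → γ) : Prop :=
  ∀ a b z, 0 < prX μ Z z →
    prE μ (fun ω => A ω = a ∧ B ω = b ∧ Z ω = z) / prX μ Z z =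
      (prE μ (fun ω => A ω = a ∧ Z ω = z) / prX μ Z z) *
        (prE μ (fun ω => B ω = b ∧ Z ω = z) / prX μ Z z)

/-- Mutual conditional independence of `X₁, X₂, X₃` given `Q`: the joint conditional pmf
factors into the product of the conditional marginals. -/
def CondIndepFun3 {Ω α₁ α₂ α₃ γ : Type} (μ : FinPMF Ω)
    (X₁ : Ω → α₁) (X₂ : Ω → α₂) (X₃ : Ω → α₃) (Q : Ω → γ) : Prop :=
  ∀ x₁ x₂ x₃ q, 0 < prX μ Q q →
    prE μ (fun ω => X₁ ω = x₁ ∧ X₂ ω = x₂ ∧ X₃ ω = x₃ ∧ Q ω = q) / prX μ Q q =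
      (prE μ (fun ω => X₁ ω = x₁ ∧ Q ω = q) / prX μ Q q) *
        (prE μ (fun ω => X₂ ω = x₂ ∧ Q ω = q) / prX μ Q q) *
        (prE μ (fun ω => X₃ ω = x₃ ∧ Q ω = q) / prX μ Q q)

/-- The ε-typical set (sequences whose empirical pmf is within a relative ε of `p`). -/
def Typical {𝒳 : Type} [Fintype 𝒳] (p : 𝒳 → ℝ) (ε : ℝ) (n : ℕ) (xs : Fin n → 𝒳) : Prop :=
  ∀ x : 𝒳, |((Finset.univ.filter fun i => xs i = x).card : ℝ) / n - p x| ≤ ε * p x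

/-- The number of codewords `⌈2^{nR}⌉` at rate `R` and blocklength `n`. -/
noncomputable def codeSize (R : ℝ) (n : ℕ) : ℕ := ⌈(2 : ℝ) ^ ((n : ℝ) * R)⌉₊

section Aux
variable {Ω : Type} (μ : FinPMF Ω)

lemma prE_nonneg (E : Ω → Prop) : 0 ≤ prE μ E := by
  letI := μ.fin
  refine Finset.sum_nonneg fun ω _ => ?_
  split
  · exact μ.nonneg ω
  · exact le_refl 0

lemma prE_congr {E F : Ω → Prop} (h : ∀ ω, E ω ↔ F ω) : prE μ E = prE μ F := by
  letI := μ.fin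
  refine Finset.sum_congr rfl fun ω _ => ?_
  simp [h ω]

lemma prE_mono {E F : Ω → Prop} (h : ∀ ω, E ω → F ω) : prE μ E ≤ prE μ F := by
  letI := μ.fin
  refine Finset.sum_le_sum fun ω _ => ?_
  by_cases hE : E ω
  · simp [hE, h ω hE]
  · simp only [hE, if_false]
    split
    · exact μ.nonneg ω
    · exact le_refl 0

lemma single_le_prE {E : Ω → Prop} (ω : Ω) (h : E ω) : μ.p ω ≤ prE μ E := by
  letI := μ.fin
  have := Finset.single_le_sum (f := fun ω' => if E ω' then μ.p ω' else 0)
    (fun i _ => by split; exacts [μ.nonneg i, le_refl 0]) (Finset.mem_univ ω)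
  simpa [h, prE] using this

lemma entH_eq {α : Type} (X : Ω → α) :
    entH μ X = -(@Finset.univ Ω μ.fin).sum
      (fun ω => μ.p ω * Real.logb 2 (prX μ X (X ω))) := by
  letI := μ.fin
  unfold entH
  congr 1
  have : ∀ x, prX μ X x * Real.logb 2 (prX μ X x)
      = ∑ ω, if X ω = x then μ.p ω * Real.logb 2 (prX μ X x) else 0 := by
    intro x
    rw [prX, prE, Finset.sum_mul]
    refine Finset.sum_congr rfl fun ω _ => ?_
    split <;> simp
  rw [Finset.sum_congr rfl fun x _ => this x, Finset.sum_comm]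
  refine Finset.sum_congr rfl fun ω _ => ?_
  rw [Finset.sum_ite_eq (Finset.univ.image X) (X ω)
    (fun x => μ.p ω * Real.logb 2 (prX μ X x))]
  rw [if_pos (Finset.mem_image_of_mem X (Finset.mem_univ ω))]

lemma entH_comp_le {α β : Type} (X : Ω → α) (g : α → β) :
    entH μ (fun ω => g (X ω)) ≤ entH μ X := by
  letI := μ.fin
  rw [entH_eq, entH_eq, neg_le_neg_iff]
  refine Finset.sum_le_sum fun ω _ => ?_
  rcases eq_or_lt_of_le (μ.nonneg ω) with hp | hp
  · rw [← hp]; simp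
  · refine mul_le_mul_of_nonneg_left ?_ hp.le
    refine Real.logb_le_logb_of_le one_lt_two
      (lt_of_lt_of_le hp (single_le_prE μ ω rfl))
      (prE_mono μ fun ω' h => congrArg g h)

lemma entH_comp_eq {α β : Type} (X : Ω → α) (g : α → β)
    (hg : Function.Injective g) :
    entH μ (fun ω => g (X ω)) = entH μ X := by
  letI := μ.fin
  rw [entH_eq, entH_eq]
  congr 1
  refine Finset.sum_congr rfl fun ω _ => ?_
  congr 2
  exact prE_congr μ fun ω' => ⟨fun h => hg h, fun h => congrArg g h⟩

lemma prX_pair {α γ : Type} (A : Ω → α) (Q : Ω → γ) (a : α) (q : γ) :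
    prX μ (fun ω => (A ω, Q ω)) (a, q) = prE μ (fun ω => A ω = a ∧ Q ω = q) :=
  prE_congr μ fun ω => by simp [Prod.ext_iff]

lemma entH_pair_of_condIndep {α β γ : Type} (A : Ω → α) (B : Ω → β) (Q : Ω → γ)
    (h : CondIndepFun μ A B Q) :
    entH μ (fun ω => ((A ω, B ω), Q ω)) + entH μ Q =
      entH μ (fun ω => (A ω, Q ω)) + entH μ (fun ω => (B ω, Q ω)) := by
  letI := μ.fin
  rw [entH_eq, entH_eq, entH_eq, entH_eq, ← neg_add, ← neg_add,
    ← Finset.sum_add_distrib, ← Finset.sum_add_distrib, neg_inj]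
  refine Finset.sum_congr rfl fun ω _ => ?_
  rcases eq_or_lt_of_le (μ.nonneg ω) with hp | hp
  · rw [← hp]; simp
  · rw [← mul_add, ← mul_add]
    congr 1
    set a := A ω; set b := B ω; set q := Q ω
    have hq : 0 < prX μ Q q := lt_of_lt_of_le hp (single_le_prE μ ω rfl)
    have habq : 0 < prE μ (fun ω' => A ω' = a ∧ B ω' = b ∧ Q ω' = q) :=
      lt_of_lt_of_le hp (single_le_prE μ ω ⟨rfl, rfl, rfl⟩)
    have haq : 0 < prE μ (fun ω' => A ω' = a ∧ Q ω' = q) :=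
      lt_of_lt_of_le hp (single_le_prE μ ω ⟨rfl, rfl⟩)
    have hbq : 0 < prE μ (fun ω' => B ω' = b ∧ Q ω' = q) :=
      lt_of_lt_of_le hp (single_le_prE μ ω ⟨rfl, rfl⟩)
    have key := h a b q hq
    have hjoint : prE μ (fun ω' => A ω' = a ∧ B ω' = b ∧ Q ω' = q) =
        prE μ (fun ω' => A ω' = a ∧ Q ω' = q) *
          prE μ (fun ω' => B ω' = b ∧ Q ω' = q) / prX μ Q q := by
      rw [eq_div_iff (ne_of_gt hq)]
      field_simp at key
      linear_combination key
    have e1 : prX μ (fun ω' => ((A ω', B ω'), Q ω')) ((a, b), q) =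
        prE μ (fun ω' => A ω' = a ∧ B ω' = b ∧ Q ω' = q) :=
      prE_congr μ fun ω' => by simp [Prod.ext_iff, and_assoc]
    rw [e1, prX_pair, prX_pair, hjoint, Real.logb_div (by positivity) (by positivity),
      Real.logb_mul (by positivity) (by positivity)]
    ring

lemma prE_marg {α : Type} [Fintype α] (A : Ω → α) (P : Ω → Prop) :
    ∑ x : α, prE μ (fun ω => A ω = x ∧ P ω) = prE μ P := by
  letI := μ.fin
  unfold prE
  rw [Finset.sum_comm]
  refine Finset.sum_congr rfl fun ω _ => ?_
  by_cases hP : P ω <;> simp [hP]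

lemma prE_decomp {α : Type} [Fintype α] (A : Ω → α) (C : α → Prop) (P : Ω → Prop) :
    prE μ (fun ω => C (A ω) ∧ P ω) =
      ∑ x : α, if C x then prE μ (fun ω => A ω = x ∧ P ω) else 0 := by
  have e : ∀ x : α, (if C x then prE μ (fun ω => A ω = x ∧ P ω) else 0)
      = prE μ (fun ω => A ω = x ∧ (C (A ω) ∧ P ω)) := by
    intro x
    split_ifs with hC
    · exact prE_congr μ fun ω =>
        ⟨fun ⟨h1, h2⟩ => ⟨h1, h1 ▸ hC, h2⟩, fun ⟨h1, _, h3⟩ => ⟨h1, h3⟩⟩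
    · have h0 : prE μ (fun ω => A ω = x ∧ (C (A ω) ∧ P ω)) = prE μ (fun _ => False) :=
        prE_congr μ fun ω => ⟨fun ⟨h1, h2, _⟩ => hC (h1 ▸ h2), False.elim⟩
      rw [h0]
      simp [prE]
  calc prE μ (fun ω => C (A ω) ∧ P ω)
      = ∑ x : α, prE μ (fun ω => A ω = x ∧ (C (A ω) ∧ P ω)) :=
        (prE_marg μ A _).symm
    _ = ∑ x : α, (if C x then prE μ (fun ω => A ω = x ∧ P ω) else 0) :=
        Finset.sum_congr rfl fun x _ => (e x).symm

lemma condIndepFun_factor {α β γ : Type} {A : Ω → α} {B : Ω → β} {Q : Ω → γ}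
    (h : CondIndepFun μ A B Q) {q : γ} (hq : 0 < prX μ Q q) (x : α) (y : β) :
    prE μ (fun ω => A ω = x ∧ B ω = y ∧ Q ω = q) =
      prE μ (fun ω => A ω = x ∧ Q ω = q) * prE μ (fun ω => B ω = y ∧ Q ω = q)
        / prX μ Q q := by
  have key := h x y q hq
  rw [eq_div_iff (ne_of_gt hq)]
  field_simp at key
  linear_combination key

lemma condIndepFun_comp {α β α' β' γ : Type} [Fintype α] [Fintype β]
    (A : Ω → α) (B : Ω → β) (Q : Ω → γ)
    (h : CondIndepFun μ A B Q) (F : α → α') (G : β → β') :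
    CondIndepFun μ (fun ω => F (A ω)) (fun ω => G (B ω)) Q := by
  intro a b q hq
  set pq := prX μ Q q with hpq
  have e1 : prE μ (fun ω => F (A ω) = a ∧ G (B ω) = b ∧ Q ω = q)
      = ∑ x : α, if F x = a
          then prE μ (fun ω => A ω = x ∧ (G (B ω) = b ∧ Q ω = q)) else 0 :=
    prE_decomp μ A (fun x => F x = a) _
  have e2 : ∀ x : α, prE μ (fun ω => A ω = x ∧ (G (B ω) = b ∧ Q ω = q))
      = ∑ y : β, if G y = b
          then prE μ (fun ω => A ω = x ∧ B ω = y ∧ Q ω = q) else 0 := by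
    intro x
    rw [prE_congr μ (F := fun ω => G (B ω) = b ∧ (A ω = x ∧ Q ω = q))
      (fun ω => by tauto), prE_decomp μ B (fun y => G y = b) _]
    refine Finset.sum_congr rfl fun y _ => ?_
    split
    · exact prE_congr μ fun ω => by tauto
    · rfl
  have e3 : prE μ (fun ω => F (A ω) = a ∧ Q ω = q)
      = ∑ x : α, if F x = a then prE μ (fun ω => A ω = x ∧ Q ω = q) else 0 :=
    prE_decomp μ A (fun x => F x = a) _
  have e4 : prE μ (fun ω => G (B ω) = b ∧ Q ω = q)
      = ∑ y : β, if G y = b then prE μ (fun ω => B ω = y ∧ Q ω = q) else 0 :=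
    prE_decomp μ B (fun y => G y = b) _
  have claim : ∀ (x : α) (y : β),
      (if F x = a then (if G y = b
          then prE μ (fun ω => A ω = x ∧ B ω = y ∧ Q ω = q) else 0) else 0)
      = (if F x = a then prE μ (fun ω => A ω = x ∧ Q ω = q) else 0) *
        (if G y = b then prE μ (fun ω => B ω = y ∧ Q ω = q) else 0) / pq := by
    intro x y
    rw [condIndepFun_factor μ h hq x y]
    split_ifs <;> simp [hpq]
  have e5 : prE μ (fun ω => F (A ω) = a ∧ G (B ω) = b ∧ Q ω = q)
      = (∑ x : α, if F x = a then prE μ (fun ω => A ω = x ∧ Q ω = q) else 0) *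
        (∑ y : β, if G y = b then prE μ (fun ω => B ω = y ∧ Q ω = q) else 0) / pq := by
    rw [e1]
    rw [Finset.sum_mul_sum, Finset.sum_div]
    refine Finset.sum_congr rfl fun x _ => ?_
    have : (if F x = a then prE μ (fun ω => A ω = x ∧ (G (B ω) = b ∧ Q ω = q)) else 0)
        = ∑ y : β, (if F x = a then (if G y = b
            then prE μ (fun ω => A ω = x ∧ B ω = y ∧ Q ω = q) else 0) else 0) := by
      split_ifs with hF
      · exact e2 x
      · simp
    rw [this, Finset.sum_div]
    exact Finset.sum_congr rfl fun y _ => claim x y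
  show prE μ (fun ω => F (A ω) = a ∧ G (B ω) = b ∧ Q ω = q) / pq
      = (prE μ (fun ω => F (A ω) = a ∧ Q ω = q) / pq) *
        (prE μ (fun ω => G (B ω) = b ∧ Q ω = q) / pq)
  rw [e5, e3, e4, div_mul_div_comm, div_div]

lemma condIndepFun3_swap12 {α₁ α₂ α₃ γ : Type} {X₁ : Ω → α₁} {X₂ : Ω → α₂}
    {X₃ : Ω → α₃} {Q : Ω → γ} (h : CondIndepFun3 μ X₁ X₂ X₃ Q) :
    CondIndepFun3 μ X₂ X₁ X₃ Q := by
  intro x₂ x₁ x₃ q hq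
  have key := h x₁ x₂ x₃ q hq
  rw [prE_congr μ (F := fun ω => X₁ ω = x₁ ∧ X₂ ω = x₂ ∧ X₃ ω = x₃ ∧ Q ω = q)
    (fun ω => by tauto), key]
  ring

lemma condIndepFun3_swap23 {α₁ α₂ α₃ γ : Type} {X₁ : Ω → α₁} {X₂ : Ω → α₂}
    {X₃ : Ω → α₃} {Q : Ω → γ} (h : CondIndepFun3 μ X₁ X₂ X₃ Q) :
    CondIndepFun3 μ X₁ X₃ X₂ Q := by
  intro x₁ x₃ x₂ q hq
  have key := h x₁ x₂ x₃ q hq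
  rw [prE_congr μ (F := fun ω => X₁ ω = x₁ ∧ X₂ ω = x₂ ∧ X₃ ω = x₃ ∧ Q ω = q)
    (fun ω => by tauto), key]
  ring

lemma condIndepFun3_pair {α₁ α₂ α₃ γ : Type} [Fintype α₁]
    {X₁ : Ω → α₁} {X₂ : Ω → α₂} {X₃ : Ω → α₃} {Q : Ω → γ}
    (h : CondIndepFun3 μ X₁ X₂ X₃ Q) :
    CondIndepFun μ X₁ (fun ω => (X₂ ω, X₃ ω)) Q := by
  intro x₁ p q hq
  obtain ⟨x₂, x₃⟩ := p
  set pq := prX μ Q q with hpq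
  have hfac : ∀ x : α₁, prE μ (fun ω => X₁ ω = x ∧ X₂ ω = x₂ ∧ X₃ ω = x₃ ∧ Q ω = q)
      = prE μ (fun ω => X₁ ω = x ∧ Q ω = q) *
        (prE μ (fun ω => X₂ ω = x₂ ∧ Q ω = q) *
          prE μ (fun ω => X₃ ω = x₃ ∧ Q ω = q)) / (pq * pq) := by
    intro x
    have key := h x x₂ x₃ q hq
    rw [eq_div_iff (by positivity)]
    field_simp at key
    have := mul_right_cancel₀ (ne_of_gt hq) (by rw [← hpq, div_eq_div_iff (ne_of_gt hq) (pow_ne_zero 3 (ne_of_gt hq))] at key; linear_combination key :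
      prE μ (fun ω => X₁ ω = x ∧ X₂ ω = x₂ ∧ X₃ ω = x₃ ∧ Q ω = q) * (pq * pq) * pq =
        prE μ (fun ω => X₁ ω = x ∧ Q ω = q) *
          (prE μ (fun ω => X₂ ω = x₂ ∧ Q ω = q) *
            prE μ (fun ω => X₃ ω = x₃ ∧ Q ω = q)) * pq)
    linarith [this]
  have hmargQ : ∑ x : α₁, prE μ (fun ω => X₁ ω = x ∧ Q ω = q) = pq :=
    prE_marg μ X₁ (fun ω => Q ω = q)
  have hB : prE μ (fun ω => (X₂ ω, X₃ ω) = (x₂, x₃) ∧ Q ω = q)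
      = prE μ (fun ω => X₂ ω = x₂ ∧ X₃ ω = x₃ ∧ Q ω = q) :=
    prE_congr μ fun ω => by simp [Prod.ext_iff, and_assoc]
  have hBm : prE μ (fun ω => X₂ ω = x₂ ∧ X₃ ω = x₃ ∧ Q ω = q)
      = ∑ x : α₁, prE μ (fun ω => X₁ ω = x ∧ X₂ ω = x₂ ∧ X₃ ω = x₃ ∧ Q ω = q) := by
    rw [← prE_marg μ X₁ (fun ω => X₂ ω = x₂ ∧ X₃ ω = x₃ ∧ Q ω = q)]
  have hA : prE μ (fun ω => X₁ ω = x₁ ∧ (X₂ ω, X₃ ω) = (x₂, x₃) ∧ Q ω = q)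
      = prE μ (fun ω => X₁ ω = x₁ ∧ X₂ ω = x₂ ∧ X₃ ω = x₃ ∧ Q ω = q) :=
    prE_congr μ fun ω => by simp [Prod.ext_iff]; tauto
  have hBval : prE μ (fun ω => (X₂ ω, X₃ ω) = (x₂, x₃) ∧ Q ω = q)
      = prE μ (fun ω => X₂ ω = x₂ ∧ Q ω = q) *
          prE μ (fun ω => X₃ ω = x₃ ∧ Q ω = q) / pq := by
    rw [hB, hBm, Finset.sum_congr rfl fun x _ => hfac x, ← Finset.sum_div,
      ← Finset.sum_mul, hmargQ]
    rw [div_eq_div_iff (by positivity) (ne_of_gt hq)]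
    ring
  show prE μ (fun ω => X₁ ω = x₁ ∧ (X₂ ω, X₃ ω) = (x₂, x₃) ∧ Q ω = q) / pq
      = _ * (prE μ (fun ω => (X₂ ω, X₃ ω) = (x₂, x₃) ∧ Q ω = q) / pq)
  rw [hA, hBval, hfac x₁]
  have hpq0 : pq ≠ 0 := ne_of_gt hq
  rw [div_div, div_div, div_mul_div_comm]
  congr 1
  ring

lemma user_MI {α σ α' y γ : Type} (A : Ω → α) (S : Ω → σ) (Q : Ω → γ)
    (g : α → α') (f : α' → σ → y) (hf : ∀ a, Function.Injective (f a))
    (hAS : CondIndepFun μ A S Q) :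
    condMI μ A (fun ω => f (g (A ω)) (S ω)) Q =
      condH μ (fun ω => f (g (A ω)) (S ω)) Q - condH μ S Q := by
  have hinj : Function.Injective
      (fun p : (α × σ) × γ => ((p.1.1, f (g p.1.1) p.1.2), p.2)) := by
    rintro ⟨⟨a, s⟩, q⟩ ⟨⟨a', s'⟩, q'⟩ hpq
    simp only [Prod.mk.injEq] at hpq
    obtain ⟨⟨ha, hfs⟩, hq⟩ := hpq
    subst ha; subst hq
    rw [hf (g a) hfs]
  have e1 : entH μ (fun ω => ((A ω, f (g (A ω)) (S ω)), Q ω)) =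
      entH μ (fun ω => ((A ω, S ω), Q ω)) :=
    entH_comp_eq μ (fun ω => ((A ω, S ω), Q ω))
      (fun p => ((p.1.1, f (g p.1.1) p.1.2), p.2)) hinj
  have e2 := entH_pair_of_condIndep μ A S Q hAS
  simp only [condMI, condH]
  linarith [e1, e2]

lemma user_H_le {α' σ y γ : Type} (Xk : Ω → α') (S : Ω → σ) (Q : Ω → γ)
    (f : α' → σ → y) (hkS : CondIndepFun μ Xk S Q) :
    condH μ (fun ω => f (Xk ω) (S ω)) Q ≤ condH μ Xk Q + condH μ S Q := by
  have m := entH_comp_le μ (fun ω => ((Xk ω, S ω), Q ω))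
    (fun p : (α' × σ) × γ => (f p.1.1 p.1.2, p.2))
  have e := entH_pair_of_condIndep μ Xk S Q hkS
  simp only [condH]
  linarith [m, e]

end Aux

/-- Single-letter sum-rate converse bound. -/
theorem sum_rate_converse_bound
    {Ω 𝒬 𝒳₁ 𝒳₂ 𝒳₃ 𝒳₁₁ 𝒳₁₂ 𝒳₁₃ 𝒳₂₁ 𝒳₂₂ 𝒳₂₃ 𝒳₃₁ 𝒳₃₂ 𝒳₃₃ 𝒮₁ 𝒮₂ 𝒮₃ 𝒴₁ 𝒴₂ 𝒴₃ : Type}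
    [Fintype 𝒬] [Nonempty 𝒬]
    [Fintype 𝒳₁] [Nonempty 𝒳₁] [Fintype 𝒳₂] [Nonempty 𝒳₂] [Fintype 𝒳₃] [Nonempty 𝒳₃]
    [Fintype 𝒳₁₁] [Nonempty 𝒳₁₁] [Fintype 𝒳₁₂] [Nonempty 𝒳₁₂] [Fintype 𝒳₁₃] [Nonempty 𝒳₁₃]
    [Fintype 𝒳₂₁] [Nonempty 𝒳₂₁] [Fintype 𝒳₂₂] [Nonempty 𝒳₂₂] [Fintype 𝒳₂₃] [Nonempty 𝒳₂₃]
    [Fintype 𝒳₃₁] [Nonempty 𝒳₃₁] [Fintype 𝒳₃₂] [Nonempty 𝒳₃₂] [Fintype 𝒳₃₃] [Nonempty 𝒳₃₃]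
    [Fintype 𝒮₁] [Nonempty 𝒮₁] [Fintype 𝒮₂] [Nonempty 𝒮₂] [Fintype 𝒮₃] [Nonempty 𝒮₃]
    [Fintype 𝒴₁] [Nonempty 𝒴₁] [Fintype 𝒴₂] [Nonempty 𝒴₂] [Fintype 𝒴₃] [Nonempty 𝒴₃]
    (μ : FinPMF Ω) (Q : Ω → 𝒬) (X₁ : Ω → 𝒳₁) (X₂ : Ω → 𝒳₂) (X₃ : Ω → 𝒳₃)
    (g₁₁ : 𝒳₁ → 𝒳₁₁) (g₁₂ : 𝒳₁ → 𝒳₁₂) (g₁₃ : 𝒳₁ → 𝒳₁₃)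
    (g₂₁ : 𝒳₂ → 𝒳₂₁) (g₂₂ : 𝒳₂ → 𝒳₂₂) (g₂₃ : 𝒳₂ → 𝒳₂₃)
    (g₃₁ : 𝒳₃ → 𝒳₃₁) (g₃₂ : 𝒳₃ → 𝒳₃₂) (g₃₃ : 𝒳₃ → 𝒳₃₃)
    (h₁ : 𝒳₂₁ → 𝒳₃₁ → 𝒮₁) (h₂ : 𝒳₁₂ → 𝒳₃₂ → 𝒮₂) (h₃ : 𝒳₁₃ → 𝒳₂₃ → 𝒮₃)
    (f₁ : 𝒳₁₁ → 𝒮₁ → 𝒴₁) (f₂ : 𝒳₂₂ → 𝒮₂ → 𝒴₂) (f₃ : 𝒳₃₃ → 𝒮₃ → 𝒴₃)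
    (hindep : CondIndepFun3 μ X₁ X₂ X₃ Q)
    (hh₁ : OneToOne h₁) (hh₂ : OneToOne h₂) (hh₃ : OneToOne h₃)
    (hf₁ : OneToOne f₁) (hf₂ : OneToOne f₂) (hf₃ : OneToOne f₃)
    (hinv₁ : condH μ (fun ω => h₁ (g₂₁ (X₂ ω)) (g₃₁ (X₃ ω))) Q =
      condH μ (fun ω => g₂₁ (X₂ ω)) Q + condH μ (fun ω => g₃₁ (X₃ ω)) Q)
    (hinv₂ : condH μ (fun ω => h₂ (g₁₂ (X₁ ω)) (g₃₂ (X₃ ω))) Q =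
      condH μ (fun ω => g₁₂ (X₁ ω)) Q + condH μ (fun ω => g₃₂ (X₃ ω)) Q)
    (hinv₃ : condH μ (fun ω => h₃ (g₁₃ (X₁ ω)) (g₂₃ (X₂ ω))) Q =
      condH μ (fun ω => g₁₃ (X₁ ω)) Q + condH μ (fun ω => g₂₃ (X₂ ω)) Q)
    (hstrong₂ : condH μ (fun ω => g₂₂ (X₂ ω)) Q ≤ condH μ (fun ω => g₂₁ (X₂ ω)) Q)
    (hstrong₃ : condH μ (fun ω => g₃₃ (X₃ ω)) Q ≤ condH μ (fun ω => g₃₁ (X₃ ω)) Q) :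
    condMI μ X₁ (fun ω => f₁ (g₁₁ (X₁ ω)) (h₁ (g₂₁ (X₂ ω)) (g₃₁ (X₃ ω)))) Q +
        condMI μ X₂ (fun ω => f₂ (g₂₂ (X₂ ω)) (h₂ (g₁₂ (X₁ ω)) (g₃₂ (X₃ ω)))) Q +
        condMI μ X₃ (fun ω => f₃ (g₃₃ (X₃ ω)) (h₃ (g₁₃ (X₁ ω)) (g₂₃ (X₂ ω)))) Q ≤
      condH μ (fun ω => f₁ (g₁₁ (X₁ ω)) (h₁ (g₂₁ (X₂ ω)) (g₃₁ (X₃ ω)))) Q := by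
  -- conditional independence facts
  have c1 : CondIndepFun μ X₁ (fun ω => (X₂ ω, X₃ ω)) Q := condIndepFun3_pair μ hindep
  have c2 : CondIndepFun μ X₂ (fun ω => (X₁ ω, X₃ ω)) Q :=
    condIndepFun3_pair μ (condIndepFun3_swap12 μ hindep)
  have c3 : CondIndepFun μ X₃ (fun ω => (X₁ ω, X₂ ω)) Q :=
    condIndepFun3_pair μ (condIndepFun3_swap12 μ (condIndepFun3_swap23 μ hindep))
  have d1 : CondIndepFun μ X₁ (fun ω => h₁ (g₂₁ (X₂ ω)) (g₃₁ (X₃ ω))) Q :=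
    condIndepFun_comp μ X₁ (fun ω => (X₂ ω, X₃ ω)) Q c1 (fun x => x)
      (fun p => h₁ (g₂₁ p.1) (g₃₁ p.2))
  have d2 : CondIndepFun μ X₂ (fun ω => h₂ (g₁₂ (X₁ ω)) (g₃₂ (X₃ ω))) Q :=
    condIndepFun_comp μ X₂ (fun ω => (X₁ ω, X₃ ω)) Q c2 (fun x => x)
      (fun p => h₂ (g₁₂ p.1) (g₃₂ p.2))
  have d3 : CondIndepFun μ X₃ (fun ω => h₃ (g₁₃ (X₁ ω)) (g₂₃ (X₂ ω))) Q :=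
    condIndepFun_comp μ X₃ (fun ω => (X₁ ω, X₂ ω)) Q c3 (fun x => x)
      (fun p => h₃ (g₁₃ p.1) (g₂₃ p.2))
  have d2' : CondIndepFun μ (fun ω => g₂₂ (X₂ ω))
      (fun ω => h₂ (g₁₂ (X₁ ω)) (g₃₂ (X₃ ω))) Q :=
    condIndepFun_comp μ X₂ (fun ω => (X₁ ω, X₃ ω)) Q c2 g₂₂
      (fun p => h₂ (g₁₂ p.1) (g₃₂ p.2))
  have d3' : CondIndepFun μ (fun ω => g₃₃ (X₃ ω))
      (fun ω => h₃ (g₁₃ (X₁ ω)) (g₂₃ (X₂ ω))) Q :=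
    condIndepFun_comp μ X₃ (fun ω => (X₁ ω, X₂ ω)) Q c3 g₃₃
      (fun p => h₃ (g₁₃ p.1) (g₂₃ p.2))
  -- mutual information identities
  have hI1 : condMI μ X₁ (fun ω => f₁ (g₁₁ (X₁ ω)) (h₁ (g₂₁ (X₂ ω)) (g₃₁ (X₃ ω)))) Q =
      condH μ (fun ω => f₁ (g₁₁ (X₁ ω)) (h₁ (g₂₁ (X₂ ω)) (g₃₁ (X₃ ω)))) Q -
        condH μ (fun ω => h₁ (g₂₁ (X₂ ω)) (g₃₁ (X₃ ω))) Q :=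
    user_MI μ X₁ (fun ω => h₁ (g₂₁ (X₂ ω)) (g₃₁ (X₃ ω))) Q g₁₁ f₁ hf₁.2 d1
  have hI2 : condMI μ X₂ (fun ω => f₂ (g₂₂ (X₂ ω)) (h₂ (g₁₂ (X₁ ω)) (g₃₂ (X₃ ω)))) Q =
      condH μ (fun ω => f₂ (g₂₂ (X₂ ω)) (h₂ (g₁₂ (X₁ ω)) (g₃₂ (X₃ ω)))) Q -
        condH μ (fun ω => h₂ (g₁₂ (X₁ ω)) (g₃₂ (X₃ ω))) Q :=
    user_MI μ X₂ (fun ω => h₂ (g₁₂ (X₁ ω)) (g₃₂ (X₃ ω))) Q g₂₂ f₂ hf₂.2 d2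
  have hI3 : condMI μ X₃ (fun ω => f₃ (g₃₃ (X₃ ω)) (h₃ (g₁₃ (X₁ ω)) (g₂₃ (X₂ ω)))) Q =
      condH μ (fun ω => f₃ (g₃₃ (X₃ ω)) (h₃ (g₁₃ (X₁ ω)) (g₂₃ (X₂ ω)))) Q -
        condH μ (fun ω => h₃ (g₁₃ (X₁ ω)) (g₂₃ (X₂ ω))) Q :=
    user_MI μ X₃ (fun ω => h₃ (g₁₃ (X₁ ω)) (g₂₃ (X₂ ω))) Q g₃₃ f₃ hf₃.2 d3
  -- entropy upper bounds for users 2 and 3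
  have hU2 : condH μ (fun ω => f₂ (g₂₂ (X₂ ω)) (h₂ (g₁₂ (X₁ ω)) (g₃₂ (X₃ ω)))) Q ≤
      condH μ (fun ω => g₂₂ (X₂ ω)) Q +
        condH μ (fun ω => h₂ (g₁₂ (X₁ ω)) (g₃₂ (X₃ ω))) Q :=
    user_H_le μ (fun ω => g₂₂ (X₂ ω)) (fun ω => h₂ (g₁₂ (X₁ ω)) (g₃₂ (X₃ ω))) Q f₂ d2'
  have hU3 : condH μ (fun ω => f₃ (g₃₃ (X₃ ω)) (h₃ (g₁₃ (X₁ ω)) (g₂₃ (X₂ ω)))) Q ≤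
      condH μ (fun ω => g₃₃ (X₃ ω)) Q +
        condH μ (fun ω => h₃ (g₁₃ (X₁ ω)) (g₂₃ (X₂ ω))) Q :=
    user_H_le μ (fun ω => g₃₃ (X₃ ω)) (fun ω => h₃ (g₁₃ (X₁ ω)) (g₂₃ (X₂ ω))) Q f₃ d3'
  linarith [hI1, hI2, hI3, hU2, hU3, hinv₁, hstrong₂, hstrong₃]
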